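/- Let τ ∈ S_k with τ_i = k, and define op_i(τ) ∈ S_{k+1} by increasing every value of τ that is at least i by 1 and then appending the value i. Then the pattern of the first k values of op_i(τ) equals τ, and op_i(τ) is an involution if and only if the permutation in S_{k-1} obtained by deleting the value k from τ (and taking the pattern) is an involution. -/

import Mathlib

open Equiv Finset

/-- The number of involutions in the symmetric group S_n. -/
def numInvolutions (n : ℕ) : ℕ :=
  (Finset.univ.filter fun π : Equiv.Perm (Fin n) => π * π = 1).card

/-- `π ∈ S_n` contains `τ ∈ S_k` as a subsequence. -/
def ContainsSubseq {n k : ℕ} (π : Equiv.Perm (Fin n)) (τ : Equiv.Perm (Fin k)) : Prop :=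
  ∃ ι : Fin k → Fin n, StrictMono ι ∧ ∀ m : Fin k, (π (ι m) : ℕ) = (τ m : ℕ)

/-- `p` is the pattern (order-preserving relabeling) of the word `w`. -/
def IsPattern {j : ℕ} {α : Type*} [LinearOrder α] (w : Fin j → α) (p : Equiv.Perm (Fin j)) : Prop :=
  ∀ a b : Fin j, p a ≤ p b ↔ w a ≤ w b

/-- The pattern of `τ_1 … τ_j` is an involution in S_j. -/
def InitPatternIsInvolution {k : ℕ} (τ : Equiv.Perm (Fin k)) (j : ℕ) : Prop :=
  ∃ hjk : j ≤ k, ∃ p : Equiv.Perm (Fin j),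
    IsPattern (fun m : Fin j => τ (Fin.castLE hjk m)) p ∧ p * p = 1

/-- The j-set of `τ`. -/
def JSet {k : ℕ} (τ : Equiv.Perm (Fin k)) : Set ℕ :=
  {0} ∪ {j | 1 ≤ j ∧ InitPatternIsInvolution τ j}

open scoped Classical in
/-- The j-set of `τ`, as a finset. -/
noncomputable def JFinset {k : ℕ} (τ : Equiv.Perm (Fin k)) : Finset ℕ :=
  (Finset.range (k + 1)).filter fun j => j ∈ JSet τ

/-- Concatenation of decreasing blocks of consecutive integers starting above `s`. -/
def layersFrom : ℕ → List ℕ → List ℕ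
  | _, [] => []
  | s, a :: rest => ((List.range a).reverse.map fun t => s + t + 1) ++ layersFrom (s + a) rest

/-- `τ` is a layered permutation. -/
def IsLayered {k : ℕ} (τ : Equiv.Perm (Fin k)) : Prop :=
  ∃ comp : List ℕ, (∀ a ∈ comp, 0 < a) ∧ comp.sum = k ∧
    List.ofFn (fun m : Fin k => (τ m : ℕ) + 1) = layersFrom 0 comp

open scoped Classical

lemma perm_eq_of_le_iff {j : ℕ} (p r : Equiv.Perm (Fin j))
    (h : ∀ a b, p a ≤ p b ↔ r a ≤ r b) : p = r := by
  have hs : StrictMono (fun a => p (r.symm a)) := by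
    intro a b hab
    have := (h (r.symm a) (r.symm b))
    simp only [Equiv.apply_symm_apply] at this
    rcases lt_or_ge (p (r.symm a)) (p (r.symm b)) with hh | hh
    · exact hh
    · exact absurd (this.mpr hab.le) (by
        intro hle
        have := (h (r.symm b) (r.symm a)).mp hh
        simp only [Equiv.apply_symm_apply] at this
        exact absurd (le_antisymm hab.le this) hab.ne)
  haveI : WellFoundedLT (Fin j) := Finite.to_wellFoundedLT
  have hid : ∀ a, p (r.symm a) = a := by
    have hinv : StrictMono (fun a => r (p.symm a)) := by
      intro a b hab
      have h2 := (h (p.symm a) (p.symm b))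
      simp only [Equiv.apply_symm_apply] at h2
      rcases lt_or_ge (r (p.symm a)) (r (p.symm b)) with hh | hh
      · exact hh
      · have h3 := (h (p.symm b) (p.symm a))
        simp only [Equiv.apply_symm_apply] at h3
        exact absurd (le_antisymm hab.le (h3.mpr hh)) hab.ne
    intro a
    have h1 : a ≤ p (r.symm a) := hs.le_apply
    have h2 : a ≤ r (p.symm a) := hinv.le_apply
    have h3 : p (r.symm a) ≤ p (r.symm (r (p.symm a))) := by
      rcases eq_or_lt_of_le h2 with he | hl
      · rw [← he]
      · exact (hs hl).le
    simp only [Equiv.symm_apply_apply, Equiv.apply_symm_apply] at h3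
    exact le_antisymm h3 h1
  ext a
  have := hid (r a)
  simp only [Equiv.symm_apply_apply] at this
  exact congrArg Fin.val this

theorem op_i_properties {k : ℕ} (τ : Equiv.Perm (Fin (k + 1))) (pos : Fin (k + 1))
    (hpos : τ pos = Fin.last k)
    (σ : Equiv.Perm (Fin (k + 2)))
    (hσ : ∀ m : Fin (k + 1), (σ (Fin.castSucc m) : ℕ) =
      if (pos : ℕ) ≤ (τ m : ℕ) then (τ m : ℕ) + 1 else (τ m : ℕ))
    (hlast : (σ (Fin.last (k + 1)) : ℕ) = (pos : ℕ)) :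
    IsPattern (fun m : Fin (k + 1) => σ (Fin.castSucc m)) τ ∧
    (σ * σ = 1 ↔
      ∃ p : Equiv.Perm (Fin k),
        IsPattern (fun m : Fin k => τ (pos.succAbove m)) p ∧ p * p = 1) := by
  -- value of succAbove
  have hsa : ∀ a : Fin k, ((pos.succAbove a : Fin (k+1)) : ℕ) =
      if (a : ℕ) < (pos : ℕ) then (a : ℕ) else (a : ℕ) + 1 := by
    intro a
    rw [Fin.succAbove]
    split <;> rename_i h <;>
      simp only [Fin.lt_def, Fin.coe_castSucc] at h <;>
      simp only [Fin.coe_castSucc, Fin.val_succ] <;> split_ifs <;> omega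
  have hne : ∀ a : Fin k, (τ (pos.succAbove a) : ℕ) < k := by
    intro a
    apply Fin.val_lt_last
    intro hcon
    exact Fin.succAbove_ne pos a (τ.injective (hcon.trans hpos.symm))
  set q : Fin k → Fin k := fun a => ⟨(τ (pos.succAbove a) : ℕ), hne a⟩ with hq
  have hqval : ∀ a, (q a : ℕ) = (τ (pos.succAbove a) : ℕ) := fun a => rfl
  -- Lemma C
  have hC : ∀ a : Fin k, σ (Fin.castSucc (pos.succAbove a)) =
      Fin.castSucc (pos.succAbove (q a)) := by
    intro a
    apply Fin.ext
    rw [hσ]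
    simp only [Fin.coe_castSucc]
    rw [hsa, hqval]
    split_ifs <;> omega
  have hplast : σ (Fin.castSucc pos) = Fin.last (k+1) := by
    apply Fin.ext
    rw [hσ, hpos]
    simp only [Fin.val_last]
    have := pos.isLt
    split_ifs <;> omega
  have hl : σ (Fin.last (k+1)) = Fin.castSucc pos := by
    apply Fin.ext
    rw [hlast]; rfl
  constructor
  · intro a b
    simp only [Fin.le_def, hσ]
    have hab : τ a = τ b ↔ a = b := τ.injective.eq_iff
    rw [Fin.ext_iff, Fin.ext_iff] at hab
    split_ifs <;> omega
  constructor
  · intro hσσ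
    have hσσ' : ∀ x, σ (σ x) = x := fun x => by
      have := Equiv.ext_iff.mp hσσ x
      simpa [Equiv.Perm.mul_apply] using this
    have hqq : ∀ a, q (q a) = a := by
      intro a
      have := hσσ' (Fin.castSucc (pos.succAbove a))
      rw [hC, hC] at this
      have h2 := Fin.castSucc_injective _ this
      exact Fin.succAbove_right_injective h2
    have hqinj : Function.Injective q := by
      intro a b hab
      have : τ (pos.succAbove a) = τ (pos.succAbove b) :=
        Fin.ext (by rw [← hqval, ← hqval, hab])
      exact Fin.succAbove_right_injective (τ.injective this)
    refine ⟨Equiv.ofBijective q (Finite.injective_iff_bijective.mp hqinj), ?_, ?_⟩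
    · intro a b
      simp only [Equiv.ofBijective_apply, Fin.le_def, hqval]
    · refine Equiv.ext fun a => ?_
      simp only [Equiv.Perm.mul_apply, Equiv.ofBijective_apply, Equiv.Perm.one_apply]
      exact hqq a
  · rintro ⟨p, hp, hpp⟩
    have hqinj : Function.Injective q := by
      intro a b hab
      have : τ (pos.succAbove a) = τ (pos.succAbove b) :=
        Fin.ext (by rw [← hqval, ← hqval, hab])
      exact Fin.succAbove_right_injective (τ.injective this)
    set qp : Equiv.Perm (Fin k) := Equiv.ofBijective q (Finite.injective_iff_bijective.mp hqinj)
      with hqp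
    have hpq : p = qp := by
      apply perm_eq_of_le_iff
      intro a b
      rw [hp a b]
      simp only [hqp, Equiv.ofBijective_apply, Fin.le_def, hqval]
    have hqq : ∀ a, q (q a) = a := by
      intro a
      have := Equiv.ext_iff.mp hpp a
      rw [hpq] at this
      simpa [Equiv.Perm.mul_apply, hqp] using this
    refine Equiv.ext fun x => ?_
    simp only [Equiv.Perm.mul_apply, Equiv.Perm.one_apply]
    induction x using Fin.lastCases with
    | last => rw [hl, hplast]
    | cast m =>
      by_cases hm : m = pos
      · subst hm; rw [hplast, hl]
      · obtain ⟨a, rfl⟩ := Fin.exists_succAbove_eq hm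
        rw [hC, hC, hqq]
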